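/- arXiv:2204.11242 — 3 statements merged into one kernel-verified Lean document; each statement's English description precedes it below -/
import Mathlib

section
/- For fixed nonnegative integer n and fixed real β > -1, the Jacobi polynomials satisfy the pointwise limit lim_{α→∞} P_n^{(α,β)}(x) / P_n^{(α,β)}(1) = ((1+x)/2)^n for every x ∈ [-1,1], where P_n^{(α,β)}(1) = Γ(α+n+1)/(n! Γ(α+1)). -/
open Real MeasureTheory Filter Set

noncomputable def jacobiP (n : ℕ) (a b x : ℝ) : ℝ :=
  ∑ s ∈ Finset.range (n + 1),
    (Real.Gamma ((n : ℝ) + a + 1) / ((Nat.factorial s : ℝ) * Real.Gamma ((n : ℝ) + a + 1 - s))) *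
    (Real.Gamma ((n : ℝ) + b + 1) / ((Nat.factorial (n - s) : ℝ) * Real.Gamma (b + 1 + s))) *
    ((x - 1) / 2) ^ (n - s) * ((x + 1) / 2) ^ s

lemma gamma_prod (k : ℕ) (z : ℝ) (hz : 0 < z) :
    Real.Gamma (z + k) = Real.Gamma z * ∏ i ∈ Finset.range k, (z + i) := by
  induction k with
  | zero => simp
  | succ k ih =>
    have h1 : (z + (k:ℝ)) ≠ 0 := by positivity
    have h2 : (z + ((k+1:ℕ):ℝ)) = (z + k) + 1 := by push_cast; ring
    rw [h2, Real.Gamma_add_one h1, ih, Finset.prod_range_succ]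
    ring

lemma jacobiP_one' (n : ℕ) (a b : ℝ) (hb : -1 < b) :
    jacobiP n a b 1 = Real.Gamma (a + n + 1) / ((Nat.factorial n : ℝ) * Real.Gamma (a + 1)) := by
  unfold jacobiP
  rw [Finset.sum_eq_single n]
  · have e1 : ((n:ℝ) + a + 1 - n) = a + 1 := by ring
    have e2 : ((n:ℝ) + b + 1) = b + 1 + n := by ring
    have e3 : ((n:ℝ) + a + 1) = a + n + 1 := by ring
    have hΓb : Real.Gamma (b + 1 + n) ≠ 0 := by
      apply (Real.Gamma_pos_of_pos (by have hn : (0:ℝ) ≤ n := Nat.cast_nonneg n; linarith)).ne'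
    rw [e1, e2, e3, Nat.sub_self]
    simp [div_self hΓb]
  · intro s hs hsn
    have hlt : s < n := lt_of_le_of_ne (Nat.lt_succ_iff.mp (Finset.mem_range.mp hs)) hsn
    have : n - s ≠ 0 := Nat.sub_ne_zero_of_lt hlt
    simp [this]
  · intro h; exact absurd (Finset.self_mem_range_succ n) h

lemma prod_inv_tendsto (k : ℕ) :
    Tendsto (fun α : ℝ => (∏ i ∈ Finset.range k, (α + 1 + i))⁻¹) atTop
      (nhds (if k = 0 then 1 else 0)) := by
  rcases Nat.eq_zero_or_pos k with hk | hk
  · simp [hk]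
  · have h : Tendsto (fun α : ℝ => ∏ i ∈ Finset.range k, (α + 1 + i)⁻¹) atTop
        (nhds (∏ i ∈ Finset.range k, (0:ℝ))) := by
      apply tendsto_finset_prod
      intro i _
      exact tendsto_inv_atTop_zero.comp
        (tendsto_atTop_add_const_right _ _ (tendsto_atTop_add_const_right _ _ tendsto_id))
    simp only [Finset.prod_inv_distrib] at h ⊢
    rw [if_neg hk.ne']
    simpa [Finset.prod_const, zero_pow hk.ne'] using h

theorem jacobi_parameter_limit (n : ℕ) (β : ℝ) (hβ : -1 < β) (x : ℝ)
    (hx : x ∈ Set.Icc (-1 : ℝ) 1) :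
    (∀ α : ℝ, -1 < α →
        jacobiP n α β 1 = Real.Gamma (α + n + 1) / ((Nat.factorial n : ℝ) * Real.Gamma (α + 1))) ∧
    Filter.Tendsto (fun α : ℝ => jacobiP n α β x / jacobiP n α β 1) Filter.atTop
      (nhds (((1 + x) / 2) ^ n)) := by
  refine ⟨fun α hα => jacobiP_one' n α β hβ, ?_⟩
  set h : ℕ → ℝ → ℝ := fun s α =>
    ((Nat.factorial n : ℝ) / ((Nat.factorial s : ℝ) * (Nat.factorial (n - s) : ℝ))) *
    (Real.Gamma ((n : ℝ) + β + 1) / Real.Gamma (β + 1 + s)) *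
    ((x - 1) / 2) ^ (n - s) * ((x + 1) / 2) ^ s *
    (∏ i ∈ Finset.range (n - s), (α + 1 + i))⁻¹ with hh
  have key : (fun α : ℝ => jacobiP n α β x / jacobiP n α β 1)
      =ᶠ[atTop] (fun α : ℝ => ∑ s ∈ Finset.range (n + 1), h s α) := by
    filter_upwards [eventually_gt_atTop (0:ℝ)] with α hα
    have hΓ1 : (0:ℝ) < Real.Gamma (α + 1) := Real.Gamma_pos_of_pos (by linarith)
    have hΓ2 : (0:ℝ) < Real.Gamma (α + n + 1) :=
      Real.Gamma_pos_of_pos (by have : (0:ℝ) ≤ n := Nat.cast_nonneg n; linarith)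
    rw [jacobiP_one' n α β hβ]
    unfold jacobiP
    rw [Finset.sum_div]
    apply Finset.sum_congr rfl
    intro s hs
    have hsn : s ≤ n := Nat.lt_succ_iff.mp (Finset.mem_range.mp hs)
    have e1 : ((n:ℝ) + α + 1 - s) = (α + 1) + ((n - s : ℕ) : ℝ) := by
      rw [Nat.cast_sub hsn]; ring
    have e3 : ((n:ℝ) + α + 1) = α + n + 1 := by ring
    have hP : (0:ℝ) < ∏ i ∈ Finset.range (n - s), (α + 1 + i) := by
      apply Finset.prod_pos; intro i _; positivity
    have e2 : Real.Gamma ((n:ℝ) + α + 1 - s)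
        = Real.Gamma (α + 1) * ∏ i ∈ Finset.range (n - s), (α + 1 + i) := by
      rw [e1, gamma_prod (n - s) (α + 1) (by linarith)]
    rw [e2, e3, hh]
    have hfs : ((Nat.factorial s : ℝ)) ≠ 0 := Nat.cast_ne_zero.mpr (Nat.factorial_ne_zero s)
    have hfns : ((Nat.factorial (n - s) : ℝ)) ≠ 0 := Nat.cast_ne_zero.mpr (Nat.factorial_ne_zero _)
    have hfn : ((Nat.factorial n : ℝ)) ≠ 0 := Nat.cast_ne_zero.mpr (Nat.factorial_ne_zero n)
    have hΓbs : Real.Gamma (β + 1 + s) ≠ 0 := by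
      apply (Real.Gamma_pos_of_pos (by have : (0:ℝ) ≤ s := Nat.cast_nonneg s; linarith)).ne'
    field_simp
  refine Tendsto.congr' key.symm ?_
  have hsum : Tendsto (fun α : ℝ => ∑ s ∈ Finset.range (n + 1), h s α) atTop
      (nhds (∑ s ∈ Finset.range (n + 1),
        (((Nat.factorial n : ℝ) / ((Nat.factorial s : ℝ) * (Nat.factorial (n - s) : ℝ))) *
        (Real.Gamma ((n : ℝ) + β + 1) / Real.Gamma (β + 1 + s)) *
        ((x - 1) / 2) ^ (n - s) * ((x + 1) / 2) ^ s *
        (if n - s = 0 then (1:ℝ) else 0)))) := by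
    apply tendsto_finset_sum
    intro s _
    exact (tendsto_const_nhds.mul (prod_inv_tendsto (n - s)))
  convert hsum using 2
  rw [Finset.sum_eq_single n]
  · have hΓb : Real.Gamma (β + 1 + n) ≠ 0 := by
      apply (Real.Gamma_pos_of_pos (by have : (0:ℝ) ≤ n := Nat.cast_nonneg n; linarith)).ne'
    have e2 : ((n:ℝ) + β + 1) = β + 1 + n := by ring
    rw [Nat.sub_self, e2]
    have hfn : ((Nat.factorial n : ℝ)) ≠ 0 := Nat.cast_ne_zero.mpr (Nat.factorial_ne_zero n)
    simp [div_self hΓb]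
    field_simp
    ring_nf
  · intro s hs hsn
    have hlt : s < n := lt_of_le_of_ne (Nat.lt_succ_iff.mp (Finset.mem_range.mp hs)) hsn
    simp [Nat.sub_ne_zero_of_lt hlt]
  · intro hmem; exact absurd (Finset.self_mem_range_succ n) hmem
end

section
/- For α, β ≥ -1/2 with α ≥ β, the Jacobi polynomial attains its maximum absolute value on [-1,1] at x = 1: for all x ∈ [-1,1], |P_n^{(α,β)}(x)| ≤ P_n^{(α,β)}(1) = (α+1)_n / n!. -/
open Real MeasureTheory Filter Set


namespace JacobiAux
open Polynomial

noncomputable def co (n : ℕ) (a b : ℝ) (s : ℕ) : ℝ :=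
  Real.Gamma ((n : ℝ) + a + 1) / ((Nat.factorial s : ℝ) * Real.Gamma ((n : ℝ) + a + 1 - s)) *
  (Real.Gamma ((n : ℝ) + b + 1) / ((Nat.factorial (n - s) : ℝ) * Real.Gamma (b + 1 + s)))

noncomputable def Rp (n : ℕ) (a b : ℝ) : ℝ[X] :=
  ∑ s ∈ Finset.range (n + 1), C (co n a b s) * ((X - 1) ^ (n - s) * (X + 1) ^ s)

lemma hd1 (a : ℕ) : (X - 1 : ℝ[X]) * derivative ((X - 1) ^ a) = C (a : ℝ) * (X - 1) ^ a := by
  cases a with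
  | zero => simp
  | succ k =>
    rw [derivative_pow]
    simp only [derivative_sub, derivative_X, derivative_one, sub_zero, Nat.add_sub_cancel]
    push_cast
    simp only [map_add, map_mul, map_ofNat, map_one, map_sub]
    ring

lemma hd2 (b : ℕ) : (X + 1 : ℝ[X]) * derivative ((X + 1) ^ b) = C (b : ℝ) * (X + 1) ^ b := by
  cases b with
  | zero => simp
  | succ k =>
    rw [derivative_pow]
    simp only [derivative_add, derivative_X, derivative_one, add_zero, Nat.add_sub_cancel]
    push_cast
    simp only [map_add, map_mul, map_ofNat, map_one, map_sub]
    ring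

lemma hdd1 (a : ℕ) : (X - 1 : ℝ[X]) ^ 2 * derivative (derivative ((X - 1) ^ a))
    = (C (a : ℝ) * (C (a : ℝ) - 1)) * (X - 1) ^ a := by
  match a with
  | 0 => simp
  | 1 => simp
  | (k+2) =>
    rw [derivative_pow]
    simp only [derivative_sub, derivative_X, derivative_one, sub_zero, Nat.add_sub_cancel,
      mul_one, derivative_mul, derivative_C, zero_mul, zero_add, derivative_pow,
      Nat.add_sub_cancel]
    push_cast
    simp only [map_add, map_mul, map_ofNat, map_one, map_sub]
    ring

lemma hdd2 (b : ℕ) : (X + 1 : ℝ[X]) ^ 2 * derivative (derivative ((X + 1) ^ b))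
    = (C (b : ℝ) * (C (b : ℝ) - 1)) * (X + 1) ^ b := by
  match b with
  | 0 => simp
  | 1 => simp
  | (k+2) =>
    rw [derivative_pow]
    simp only [derivative_add, derivative_X, derivative_one, add_zero, Nat.add_sub_cancel,
      mul_one, derivative_mul, derivative_C, zero_mul, zero_add, derivative_pow,
      Nat.add_sub_cancel]
    push_cast
    simp only [map_add, map_mul, map_ofNat, map_one, map_sub]
    ring

lemma crec (n : ℕ) (α β : ℝ) (hβ : -(1/2 : ℝ) ≤ β) (hαβ : β ≤ α) {s : ℕ} (hs : s < n) :
    co n α β (s+1) * ((s:ℝ)+1) * ((s:ℝ)+1+β) = co n α β s * ((n:ℝ)-s) * (((n:ℝ)-s)+α) := by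
  have hα : -(1/2 : ℝ) ≤ α := le_trans hβ hαβ
  have hns : (s:ℝ) + 1 ≤ (n:ℝ) := by exact_mod_cast hs
  have hx : (0:ℝ) < (n:ℝ) + α - s := by linarith
  have hy : (0:ℝ) < β + 1 + s := by
    have : (0:ℝ) ≤ s := Nat.cast_nonneg s
    linarith
  have hGa : Real.Gamma ((n:ℝ) + α + 1 - s) = ((n:ℝ) + α - s) * Real.Gamma ((n:ℝ) + α - s) := by
    rw [show (n:ℝ) + α + 1 - s = ((n:ℝ) + α - s) + 1 by ring, Real.Gamma_add_one hx.ne']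
  have hGa' : Real.Gamma ((n:ℝ) + α + 1 - ↑(s+1)) = Real.Gamma ((n:ℝ) + α - s) := by
    congr 1; push_cast; ring
  have hGb : Real.Gamma (β + 1 + ↑(s+1)) = (β + 1 + s) * Real.Gamma (β + 1 + s) := by
    rw [show β + 1 + ↑(s+1) = (β + 1 + (s:ℝ)) + 1 by push_cast; ring,
      Real.Gamma_add_one (by linarith : β + 1 + (s:ℝ) ≠ 0)]
  have hfacns : ((Nat.factorial (n - s) : ℕ) : ℝ) = ((n:ℝ) - s) * (Nat.factorial (n - (s+1)) : ℝ) := by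
    rw [show n - s = (n - (s+1)) + 1 by omega, Nat.factorial_succ]
    push_cast [Nat.cast_sub (by omega : s + 1 ≤ n)]
    ring
  have hfs : ((Nat.factorial (s+1) : ℕ) : ℝ) = ((s:ℝ)+1) * (Nat.factorial s : ℝ) := by
    rw [Nat.factorial_succ]; push_cast; ring
  have hg1 : Real.Gamma ((n:ℝ) + α - s) ≠ 0 := (Real.Gamma_pos_of_pos hx).ne'
  have hg2 : Real.Gamma (β + 1 + s) ≠ 0 := (Real.Gamma_pos_of_pos hy).ne'
  have hf1 : (Nat.factorial s : ℝ) ≠ 0 := by exact_mod_cast (Nat.factorial_pos s).ne'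
  have hf2 : (Nat.factorial (n - (s+1)) : ℝ) ≠ 0 := by
    exact_mod_cast (Nat.factorial_pos (n - (s+1))).ne'
  have hns0 : (n:ℝ) - s ≠ 0 := by linarith
  have hs1 : (s:ℝ) + 1 ≠ 0 := by positivity
  unfold co
  rw [hGa', hGb, hGa, hfacns, hfs]
  field_simp
  ring

lemma key (α β : ℝ) (a b : ℕ) :
    (X - 1) * (X + 1) *
      ((X ^ 2 - 1) * derivative (derivative ((X - 1) ^ a * (X + 1) ^ b))
        + ((C α + C β + 2) * X + (C α - C β)) * derivative ((X - 1) ^ a * (X + 1) ^ b))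
    = (C (a : ℝ) + C (b : ℝ)) * (C (a : ℝ) + C (b : ℝ) + C α + C β + 1) *
        (((X - 1) ^ a * (X - 1)) * ((X + 1) ^ b * (X + 1)))
      + 2 * C (a : ℝ) * (C (a : ℝ) + C α) * ((X - 1) ^ a * ((X + 1) ^ b * (X + 1)))
      - 2 * C (b : ℝ) * (C (b : ℝ) + C β) * (((X - 1) ^ a * (X - 1)) * (X + 1) ^ b) := by
  have h5 : ((X - 1 : ℝ[X]) * derivative ((X - 1) ^ a)) * ((X + 1) * derivative ((X + 1) ^ b))
      = C (a : ℝ) * C (b : ℝ) * ((X - 1) ^ a * (X + 1) ^ b) := by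
    rw [hd1, hd2]; ring
  rw [derivative_mul, derivative_add, derivative_mul, derivative_mul]
  linear_combination ((X + 1 : ℝ[X]) ^ 2 * (X + 1) ^ b) * hdd1 a
    + ((X - 1 : ℝ[X]) ^ 2 * (X - 1) ^ a) * hdd2 b
    + (2 * (X - 1 : ℝ[X]) * (X + 1)) * h5
    + (((C α + C β + 2) * X + (C α - C β)) * (X + 1) * (X + 1) ^ b) * hd1 a
    + (((C α + C β + 2) * X + (C α - C β)) * (X - 1) * (X - 1) ^ a) * hd2 b

lemma ode (n : ℕ) (α β : ℝ) (hβ : -(1/2 : ℝ) ≤ β) (hαβ : β ≤ α) :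
    (X ^ 2 - 1) * derivative (derivative (Rp n α β))
      + ((C α + C β + 2) * X + (C α - C β)) * derivative (Rp n α β)
    = C (n : ℝ) * (C (n : ℝ) + C α + C β + 1) * Rp n α β := by
  have hX1 : (X - 1 : ℝ[X]) ≠ 0 := fun h => by simpa using congrArg (eval 0) h
  have hX2 : (X + 1 : ℝ[X]) ≠ 0 := fun h => by simpa using congrArg (eval 0) h
  apply mul_left_cancel₀ (mul_ne_zero hX1 hX2)
  set F : ℕ → ℝ[X] := fun s => C (co n α β s) *
      (2 * (C (n:ℝ) - C (s:ℝ)) * ((C (n:ℝ) - C (s:ℝ)) + C α)) *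
      ((X - 1) ^ (n - s) * ((X + 1) ^ s * (X + 1))) with hF
  set G : ℕ → ℝ[X] := fun s => C (co n α β s) *
      (2 * C (s:ℝ) * (C (s:ℝ) + C β)) *
      (((X - 1) ^ (n - s) * (X - 1)) * (X + 1) ^ s) with hG
  have tele : ∑ s ∈ Finset.range (n + 1), (F s - G s) = 0 := by
    rw [Finset.sum_sub_distrib, sub_eq_zero, Finset.sum_range_succ, Finset.sum_range_succ']
    have hFn : F n = 0 := by simp [hF]
    have hG0 : G 0 = 0 := by simp [hG]
    rw [hFn, hG0, add_zero, add_zero]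
    refine Finset.sum_congr rfl fun s hs => ?_
    have hsn : s < n := Finset.mem_range.mp hs
    have hrec := crec n α β hβ hαβ hsn
    have hpow : ((X:ℝ[X]) - 1) ^ (n - s) = (X - 1) ^ (n - (s+1)) * (X - 1) := by
      rw [← pow_succ, show n - (s+1) + 1 = n - s by omega]
    have hc : (((s+1 : ℕ)) : ℝ) = (s:ℝ) + 1 := by push_cast; ring
    rw [hF, hG]
    simp only [hc]
    rw [hpow, show (s + 1 : ℕ) = s + 1 from rfl]
    have : C (co n α β s) * (2 * (C (n:ℝ) - C (s:ℝ)) * ((C (n:ℝ) - C (s:ℝ)) + C α))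
        = C (co n α β (s+1)) * (2 * C ((s:ℝ)+1) * (C ((s:ℝ)+1) + C β)) := by
      calc C (co n α β s) * (2 * (C (n:ℝ) - C (s:ℝ)) * ((C (n:ℝ) - C (s:ℝ)) + C α))
          = C (co n α β s * (2 * ((n:ℝ) - (s:ℝ)) * (((n:ℝ) - (s:ℝ)) + α))) := by
            simp only [map_mul, map_sub, map_add, map_ofNat]
        _ = C (co n α β (s+1) * (2 * ((s:ℝ)+1) * (((s:ℝ)+1) + β))) :=
            congrArg C (by linear_combination (-2 : ℝ) * hrec)
        _ = C (co n α β (s+1)) * (2 * C ((s:ℝ)+1) * (C ((s:ℝ)+1) + C β)) := by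
            simp only [map_mul, map_add, map_ofNat]
    rw [pow_succ]
    rw [this]
  have expand : (X - 1) * (X + 1) *
      ((X ^ 2 - 1) * derivative (derivative (Rp n α β))
        + ((C α + C β + 2) * X + (C α - C β)) * derivative (Rp n α β))
      = ∑ s ∈ Finset.range (n + 1), C (co n α β s) *
        ((X - 1) * (X + 1) *
          ((X ^ 2 - 1) * derivative (derivative ((X - 1) ^ (n - s) * (X + 1) ^ s))
            + ((C α + C β + 2) * X + (C α - C β)) *
              derivative ((X - 1) ^ (n - s) * (X + 1) ^ s))) := by
    rw [Rp]
    simp only [derivative_sum, derivative_C_mul, Finset.mul_sum, ← Finset.sum_add_distrib]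
    exact Finset.sum_congr rfl fun s hs => by ring
  rw [expand]
  have step2 : ∀ s ∈ Finset.range (n + 1),
      C (co n α β s) *
        ((X - 1) * (X + 1) *
          ((X ^ 2 - 1) * derivative (derivative ((X - 1) ^ (n - s) * (X + 1) ^ s))
            + ((C α + C β + 2) * X + (C α - C β)) *
              derivative ((X - 1) ^ (n - s) * (X + 1) ^ s)))
      = C (n:ℝ) * (C (n:ℝ) + C α + C β + 1) *
          ((X - 1) * (X + 1) * (C (co n α β s) * ((X - 1) ^ (n - s) * (X + 1) ^ s)))
        + (F s - G s) := by
    intro s hs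
    have hsn : s ≤ n := by have := Finset.mem_range.mp hs; omega
    rw [key α β (n - s) s]
    have hc : (((n - s : ℕ)) : ℝ) = (n:ℝ) - (s:ℝ) := by
      push_cast [Nat.cast_sub hsn]; ring
    rw [hc, hF, hG]
    simp only [map_sub]
    ring
  rw [Finset.sum_congr rfl step2, Finset.sum_add_distrib, tele, add_zero, ← Finset.mul_sum]
  have : ∑ s ∈ Finset.range (n + 1),
      (X - 1) * (X + 1) * (C (co n α β s) * ((X - 1) ^ (n - s) * (X + 1) ^ s))
      = (X - 1) * (X + 1) * Rp n α β := by
    rw [Rp, Finset.mul_sum]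
  rw [this]
  ring

lemma dFF (n : ℕ) (α β : ℝ) (hβ : -(1/2 : ℝ) ≤ β) (hαβ : β ≤ α) :
    derivative (C (n:ℝ) * (C (n:ℝ) + C α + C β + 1) * (Rp n α β) ^ 2
        + (1 - X ^ 2) * (derivative (Rp n α β)) ^ 2)
      = 2 * (derivative (Rp n α β)) ^ 2 * ((C α + C β + 1) * X + (C α - C β)) := by
  have h := ode n α β hβ hαβ
  simp only [derivative_add, derivative_mul, derivative_pow, derivative_one, derivative_X,
    derivative_C, derivative_sub, Nat.cast_ofNat, pow_one, zero_mul, zero_add, mul_one,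
    zero_sub, mul_zero, add_zero, Nat.add_sub_cancel, map_ofNat]
  linear_combination (-2 * derivative (Rp n α β)) * h

lemma jacobiP_eq (n : ℕ) (a b x : ℝ) :
    (∑ s ∈ Finset.range (n + 1),
      (Real.Gamma ((n : ℝ) + a + 1) / ((Nat.factorial s : ℝ) * Real.Gamma ((n : ℝ) + a + 1 - s))) *
      (Real.Gamma ((n : ℝ) + b + 1) / ((Nat.factorial (n - s) : ℝ) * Real.Gamma (b + 1 + s))) *
      ((x - 1) / 2) ^ (n - s) * ((x + 1) / 2) ^ s)
    = (2:ℝ)⁻¹ ^ n * eval x (Rp n a b) := by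
  rw [Rp, eval_finset_sum, Finset.mul_sum]
  refine Finset.sum_congr rfl fun s hs => ?_
  have hsn : s ≤ n := by have := Finset.mem_range.mp hs; omega
  have h2 : ((2:ℝ)⁻¹) ^ (n - s) * ((2:ℝ)⁻¹) ^ s = (2:ℝ)⁻¹ ^ n := by
    rw [← pow_add, Nat.sub_add_cancel hsn]
  simp only [eval_mul, eval_C, eval_pow, eval_sub, eval_add, eval_one, eval_X]
  rw [div_pow, div_pow]
  rw [show ((x-1)^(n-s) / 2^(n-s)) = (x-1)^(n-s) * (2:ℝ)⁻¹^(n-s) by rw [div_eq_mul_inv, inv_pow],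
      show ((x+1)^s / 2^s) = (x+1)^s * (2:ℝ)⁻¹^s by rw [div_eq_mul_inv, inv_pow]]
  rw [co]
  calc _ = (2:ℝ)⁻¹^(n-s) * (2:ℝ)⁻¹^s * (Real.Gamma ((n : ℝ) + a + 1) / ((Nat.factorial s : ℝ) * Real.Gamma ((n : ℝ) + a + 1 - s)) *
      (Real.Gamma ((n : ℝ) + b + 1) / ((Nat.factorial (n - s) : ℝ) * Real.Gamma (b + 1 + s))) * ((x - 1) ^ (n - s) * (x + 1) ^ s)) := by ring
    _ = _ := by rw [h2]

lemma evalRp_one (n : ℕ) (a b : ℝ) : eval 1 (Rp n a b) = 2 ^ n * co n a b n := by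
  rw [Rp, eval_finset_sum]
  rw [Finset.sum_eq_single_of_mem n (Finset.self_mem_range_succ n)]
  · simp only [eval_mul, eval_C, eval_pow, eval_sub, eval_add, eval_one, eval_X, Nat.sub_self,
      pow_zero, one_mul]
    rw [show (1:ℝ) + 1 = 2 by norm_num]
    ring
  · intro s hs hne
    have : n - s ≠ 0 := by have := Finset.mem_range.mp hs; omega
    simp [eval_mul, eval_pow, this, zero_pow]

lemma evalRp_negone (n : ℕ) (a b : ℝ) : eval (-1) (Rp n a b) = (-2) ^ n * co n a b 0 := by
  rw [Rp, eval_finset_sum]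
  rw [Finset.sum_eq_single_of_mem 0 (Finset.mem_range.mpr (by omega))]
  · simp only [eval_mul, eval_C, eval_pow, eval_sub, eval_add, eval_one, eval_X, Nat.sub_zero,
      pow_zero, mul_one]
    rw [show (-1:ℝ) - 1 = -2 by norm_num]
    ring
  · intro s hs hne
    simp [eval_mul, eval_pow, hne, zero_pow]

lemma gammaPoch (n : ℕ) {x : ℝ} (hx : 0 < x) :
    Real.Gamma (x + n) = (ascPochhammer ℝ n).eval x * Real.Gamma x := by
  induction n with
  | zero => simp
  | succ k ih =>
    have hxk : x + (k:ℝ) ≠ 0 := by positivity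
    rw [show x + ((k+1 : ℕ):ℝ) = (x + k) + 1 by push_cast; ring, Real.Gamma_add_one hxk, ih,
      ascPochhammer_succ_right]
    simp [eval_mul, eval_add, eval_X, eval_natCast]
    ring

lemma pochNonnegMono (n : ℕ) {α β : ℝ} (hβ : -(1/2 : ℝ) ≤ β) (hαβ : β ≤ α) :
    0 ≤ (ascPochhammer ℝ n).eval (β + 1) ∧
      (ascPochhammer ℝ n).eval (β + 1) ≤ (ascPochhammer ℝ n).eval (α + 1) := by
  induction n with
  | zero => simp
  | succ k ih =>
    rw [ascPochhammer_succ_right]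
    simp only [eval_mul, eval_add, eval_X, eval_natCast]
    have h1 : (0:ℝ) ≤ β + 1 + k := by
      have : (0:ℝ) ≤ k := Nat.cast_nonneg k
      linarith
    have h2 : β + 1 + k ≤ α + 1 + k := by linarith
    constructor
    · exact mul_nonneg ih.1 h1
    · exact mul_le_mul ih.2 h2 h1 (le_trans ih.1 ih.2)


lemma co_top (n : ℕ) {α β : ℝ} (hα : (0:ℝ) < α + 1) (hβ : (0:ℝ) < β + 1) :
    co n α β n = (ascPochhammer ℝ n).eval (α + 1) / (Nat.factorial n : ℝ) := by
  have hgb : Real.Gamma ((n:ℝ) + β + 1) ≠ 0 := by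
    have : (0:ℝ) < (n:ℝ) + β + 1 := by
      have : (0:ℝ) ≤ n := Nat.cast_nonneg n; linarith
    exact (Real.Gamma_pos_of_pos this).ne'
  have hga : Real.Gamma (α + 1) ≠ 0 := (Real.Gamma_pos_of_pos hα).ne'
  have hnf : (Nat.factorial n : ℝ) ≠ 0 := by exact_mod_cast (Nat.factorial_pos n).ne'
  unfold co
  rw [Nat.sub_self, Nat.factorial_zero]
  rw [show (n:ℝ) + α + 1 - n = α + 1 by ring]
  rw [show β + 1 + (n:ℝ) = ((n:ℝ) + β + 1) by ring]
  rw [show (n:ℝ) + α + 1 = (α + 1) + n by ring, gammaPoch n hα]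
  field_simp
  ring

lemma co_bot (n : ℕ) {α β : ℝ} (hα : (0:ℝ) < α + 1) (hβ : (0:ℝ) < β + 1) :
    co n α β 0 = (ascPochhammer ℝ n).eval (β + 1) / (Nat.factorial n : ℝ) := by
  have hga : Real.Gamma ((n:ℝ) + α + 1) ≠ 0 := by
    have : (0:ℝ) < (n:ℝ) + α + 1 := by
      have : (0:ℝ) ≤ n := Nat.cast_nonneg n; linarith
    exact (Real.Gamma_pos_of_pos this).ne'
  have hgb : Real.Gamma (β + 1) ≠ 0 := (Real.Gamma_pos_of_pos hβ).ne'
  have hnf : (Nat.factorial n : ℝ) ≠ 0 := by exact_mod_cast (Nat.factorial_pos n).ne'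
  unfold co
  rw [Nat.sub_zero, Nat.factorial_zero]
  rw [show ((0:ℕ):ℝ) = (0:ℝ) by norm_num]
  rw [show (n:ℝ) + α + 1 - 0 = (n:ℝ) + α + 1 by ring]
  rw [show β + 1 + (0:ℝ) = β + 1 by ring]
  rw [show (n:ℝ) + β + 1 = (β + 1) + n by ring, gammaPoch n hβ]
  field_simp
  ring

lemma main (n : ℕ) (α β : ℝ) (hβ : -(1 / 2 : ℝ) ≤ β) (hαβ : β ≤ α) :
    (∀ x ∈ Set.Icc (-1 : ℝ) 1, |jacobiP n α β x| ≤ jacobiP n α β 1) ∧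
    jacobiP n α β 1 = (ascPochhammer ℝ n).eval (α + 1) / (Nat.factorial n : ℝ) := by
  have hα : -(1/2:ℝ) ≤ α := le_trans hβ hαβ
  have hα1 : (0:ℝ) < α + 1 := by linarith
  have hβ1 : (0:ℝ) < β + 1 := by linarith
  have hjac : ∀ x : ℝ, jacobiP n α β x = (2:ℝ)⁻¹ ^ n * eval x (Rp n α β) := by
    intro x; rw [jacobiP]; exact jacobiP_eq n α β x
  have hnf : (0:ℝ) < (Nat.factorial n : ℝ) := by exact_mod_cast Nat.factorial_pos n
  have hpoch := pochNonnegMono n hβ hαβ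
  have hv1 : eval 1 (Rp n α β)
      = 2 ^ n * ((ascPochhammer ℝ n).eval (α + 1) / (Nat.factorial n : ℝ)) := by
    rw [evalRp_one, co_top n hα1 hβ1]
  have hvm1 : eval (-1) (Rp n α β)
      = (-2) ^ n * ((ascPochhammer ℝ n).eval (β + 1) / (Nat.factorial n : ℝ)) := by
    rw [evalRp_negone, co_bot n hα1 hβ1]
  have hpart2 : jacobiP n α β 1 = (ascPochhammer ℝ n).eval (α + 1) / (Nat.factorial n : ℝ) := by
    rw [hjac 1, hv1, ← mul_assoc, ← mul_pow]
    norm_num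
  refine ⟨?_, hpart2⟩
  rintro x ⟨hx1, hx2⟩
  have hge : 0 ≤ jacobiP n α β 1 := by
    rw [hpart2]; exact div_nonneg (le_trans hpoch.1 hpoch.2) hnf.le
  by_cases hn : n = 0
  · subst hn
    have hconst : jacobiP 0 α β x = jacobiP 0 α β 1 := by
      rw [hjac x, hjac 1]
      simp [Rp, Finset.sum_range_one]
    rw [hconst, abs_of_nonneg hge]
  · have hn1 : (1:ℝ) ≤ n := by exact_mod_cast Nat.one_le_iff_ne_zero.mpr hn
    set R : ℝ[X] := Rp n α β with hR
    set lam : ℝ := (n:ℝ) * ((n:ℝ) + α + β + 1) with hlam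
    have hlampos : 0 < lam := by
      apply mul_pos <;> linarith
    set FF : ℝ[X] := C (n:ℝ) * (C (n:ℝ) + C α + C β + 1) * R ^ 2
        + (1 - X ^ 2) * (derivative R) ^ 2 with hFF
    have hfev : ∀ t : ℝ, eval t FF
        = lam * (eval t R) ^ 2 + (1 - t ^ 2) * (eval t (derivative R)) ^ 2 := by
      intro t
      simp only [hFF, hlam, eval_add, eval_mul, eval_pow, eval_sub, eval_one, eval_X, eval_C]
    have hdiff : Differentiable ℝ (fun t : ℝ => eval t FF) := FF.differentiable
    have hderiv : ∀ t : ℝ, deriv (fun t : ℝ => eval t FF) t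
        = 2 * (eval t (derivative R)) ^ 2 * ((α + β + 1) * t + (α - β)) := by
      intro t
      rw [Polynomial.deriv, hFF, dFF n α β hβ hαβ]
      simp only [eval_mul, eval_pow, eval_add, eval_sub, eval_C, eval_X, eval_ofNat, eval_one]
      rfl
    have hab : 0 ≤ α + β + 1 := by linarith
    have hmax : eval x FF ≤ max (eval (-1) FF) (eval 1 FF) := by
      by_cases hc : 0 ≤ (α + β + 1) * x + (α - β)
      · refine le_trans ?_ (le_max_right _ _)
        have mono : MonotoneOn (fun t : ℝ => eval t FF) (Set.Icc x 1) := by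
          refine monotoneOn_of_deriv_nonneg (convex_Icc x 1) hdiff.continuous.continuousOn
            hdiff.differentiableOn ?_
          intro t ht
          rw [interior_Icc] at ht
          rw [hderiv t]
          have h0 : 0 ≤ (α + β + 1) * t + (α - β) := by nlinarith [ht.1]
          have h1 : (0:ℝ) ≤ 2 * (eval t (derivative R)) ^ 2 := by positivity
          exact mul_nonneg h1 h0
        exact mono ⟨le_refl x, hx2⟩ ⟨hx2, le_refl 1⟩ hx2
      · refine le_trans ?_ (le_max_left _ _)
        push_neg at hc
        have anti : AntitoneOn (fun t : ℝ => eval t FF) (Set.Icc (-1) x) := by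
          refine antitoneOn_of_deriv_nonpos (convex_Icc (-1) x) hdiff.continuous.continuousOn
            hdiff.differentiableOn ?_
          intro t ht
          rw [interior_Icc] at ht
          rw [hderiv t]
          have h0 : (α + β + 1) * t + (α - β) ≤ 0 := by nlinarith [ht.2]
          have h1 : (0:ℝ) ≤ 2 * (eval t (derivative R)) ^ 2 := by positivity
          exact mul_nonpos_of_nonneg_of_nonpos h1 h0
        exact anti ⟨le_refl (-1), hx1⟩ ⟨hx1, le_refl x⟩ hx1
    have hfx : lam * (eval x R) ^ 2 ≤ eval x FF := by
      rw [hfev x]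
      nlinarith [mul_nonneg (by nlinarith : (0:ℝ) ≤ 1 - x ^ 2) (sq_nonneg (eval x (derivative R)))]
    have hf1 : eval 1 FF = lam * (eval 1 R) ^ 2 := by rw [hfev 1]; ring
    have hfm1 : eval (-1) FF = lam * (eval (-1) R) ^ 2 := by rw [hfev (-1)]; ring
    have hsqm : (eval (-1) R) ^ 2 ≤ (eval 1 R) ^ 2 := by
      rw [hR, hv1, hvm1, mul_pow, mul_pow]
      have h4 : ((-2:ℝ) ^ n) ^ 2 = ((2:ℝ) ^ n) ^ 2 := by
        rw [← pow_mul, ← pow_mul, mul_comm n 2, pow_mul, pow_mul]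
        norm_num
      rw [h4]
      refine mul_le_mul_of_nonneg_left ?_ (sq_nonneg _)
      have hb0 : 0 ≤ (ascPochhammer ℝ n).eval (β + 1) / (Nat.factorial n : ℝ) :=
        div_nonneg hpoch.1 hnf.le
      have hba : (ascPochhammer ℝ n).eval (β + 1) / (Nat.factorial n : ℝ)
          ≤ (ascPochhammer ℝ n).eval (α + 1) / (Nat.factorial n : ℝ) := by
        exact div_le_div_of_nonneg_right hpoch.2 hnf.le
      exact pow_le_pow_left₀ hb0 hba 2
    have hkey : (eval x R) ^ 2 ≤ (eval 1 R) ^ 2 := by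
      have h1 : lam * (eval x R) ^ 2 ≤ lam * (eval 1 R) ^ 2 := by
        calc lam * (eval x R) ^ 2 ≤ eval x FF := hfx
          _ ≤ max (eval (-1) FF) (eval 1 FF) := hmax
          _ ≤ lam * (eval 1 R) ^ 2 := by
            rw [hf1, hfm1]
            exact max_le (mul_le_mul_of_nonneg_left hsqm hlampos.le) (le_refl _)
      exact le_of_mul_le_mul_left h1 hlampos
    have hv1pos : 0 ≤ eval 1 R := by
      rw [hR, hv1]
      have := le_trans hpoch.1 hpoch.2
      positivity
    rw [hjac x, hjac 1, abs_mul, abs_of_nonneg (by positivity : (0:ℝ) ≤ (2:ℝ)⁻¹ ^ n)]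
    refine mul_le_mul_of_nonneg_left ?_ (by positivity)
    exact abs_le_of_sq_le_sq' hkey hv1pos |>.2 |> (abs_le.mpr ⟨(abs_le_of_sq_le_sq' hkey hv1pos).1, ·⟩)
end JacobiAux

theorem jacobi_max_at_one (n : ℕ) (α β : ℝ) (hβ : -(1 / 2 : ℝ) ≤ β) (hαβ : β ≤ α) :
    (∀ x ∈ Set.Icc (-1 : ℝ) 1, |jacobiP n α β x| ≤ jacobiP n α β 1) ∧
    jacobiP n α β 1 = (ascPochhammer ℝ n).eval (α + 1) / (Nat.factorial n : ℝ) :=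
  JacobiAux.main n α β hβ hαβ
end

section
/- Let t, φ : [a,b] → ℝ with t continuous, t(x) > t(a) for all x ∈ (a,b], t(x) = t(a) + a₀(x-a) + o(x-a) with a₀ > 0, and φ(x) = b₀(x-a)^{γ-1}(1+o(1)) as x → a⁺ with b₀ > 0, γ > 0, and suppose φ e^{-q t} is integrable on (a,b) for all large q. Then ∫_a^b φ(x) e^{-q t(x)} dx = e^{-q t(a)} (Γ(γ) b₀ a₀^{-γ} q^{-γ} (1 + o(1))) as q → ∞. -/
open Real MeasureTheory Filter Set

private lemma laplace_model_aux (γ c δ : ℝ) (hγ : 0 < γ) (hc : 0 < c) (hδ : 0 < δ) :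
    Filter.Tendsto (fun q : ℝ => q ^ γ * ∫ u in (0:ℝ)..δ, u ^ (γ - 1) * Real.exp (-(q * c * u)))
      Filter.atTop (nhds (c ^ (-γ) * Real.Gamma γ)) := by
  have hInt : IntegrableOn (fun v : ℝ => v ^ (γ - 1) * Real.exp (-v)) (Ioi 0) := by
    exact (Real.GammaIntegral_convergent hγ).congr_fun
      (fun x _ => mul_comm _ _) measurableSet_Ioi
  have hval : ∫ v in Ioi (0:ℝ), v ^ (γ - 1) * Real.exp (-v) = Real.Gamma γ := by
    rw [Real.Gamma_eq_integral hγ]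
    exact setIntegral_congr_fun measurableSet_Ioi (fun x _ => mul_comm _ _)
  have hX : Tendsto (fun q : ℝ => q * c * δ) atTop atTop :=
    (tendsto_id.atTop_mul_const hc).atTop_mul_const hδ
  have hmain : Tendsto (fun q : ℝ => ∫ v in (0:ℝ)..(q * c * δ), v ^ (γ - 1) * Real.exp (-v))
      atTop (nhds (Real.Gamma γ)) := by
    rw [← hval]
    exact intervalIntegral_tendsto_integral_Ioi 0 hInt hX
  refine Tendsto.congr' ?_ (hmain.const_mul (c ^ (-γ)))
  filter_upwards [eventually_gt_atTop 0] with q hq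
  have hqc : 0 < q * c := mul_pos hq hc
  have h1 : ∫ u in (0:ℝ)..δ, u ^ (γ - 1) * Real.exp (-(q * c * u))
      = ((q * c) ^ (γ - 1))⁻¹ * ∫ u in (0:ℝ)..δ,
          ((q * c) * u) ^ (γ - 1) * Real.exp (-((q * c) * u)) := by
    rw [← intervalIntegral.integral_const_mul]
    apply intervalIntegral.integral_congr
    intro u hu
    rw [Set.uIcc_of_le hδ.le] at hu
    have hu0 : 0 ≤ u := hu.1
    have hne : ((q * c) ^ (γ - 1)) ≠ 0 := (Real.rpow_pos_of_pos hqc _).ne'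
    dsimp only
    rw [Real.mul_rpow hqc.le hu0]
    field_simp
  have h2 : ∫ u in (0:ℝ)..δ, ((q * c) * u) ^ (γ - 1) * Real.exp (-((q * c) * u))
      = (q * c)⁻¹ * ∫ v in ((q * c) * 0)..((q * c) * δ), v ^ (γ - 1) * Real.exp (-v) := by
    have h := intervalIntegral.integral_comp_mul_left (a := 0) (b := δ)
      (fun v => v ^ (γ - 1) * Real.exp (-v)) hqc.ne'
    simpa [smul_eq_mul] using h
  have hfac : c ^ (-γ) = q ^ γ * (((q * c) ^ (γ - 1))⁻¹ * (q * c)⁻¹) := by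
    rw [Real.rpow_neg hc.le, Real.rpow_sub_one hqc.ne', Real.mul_rpow hq.le hc.le]
    have h3 : q ^ γ ≠ 0 := (Real.rpow_pos_of_pos hq _).ne'
    have h4 : c ^ γ ≠ 0 := (Real.rpow_pos_of_pos hc _).ne'
    field_simp
  rw [h1, h2, mul_zero]
  rw [hfac]
  ring

set_option maxHeartbeats 1000000 in
theorem laplace_endpoint_asymptotics (a b a₀ b₀ γ : ℝ) (t φ : ℝ → ℝ) (hab : a < b)
    (ht : ContinuousOn t (Set.Icc a b))
    (hmin : ∀ x ∈ Set.Ioc a b, t a < t x)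
    (ha₀ : 0 < a₀) (hb₀ : 0 < b₀) (hγ : 0 < γ)
    (hT : (fun x => t x - t a - a₀ * (x - a)) =o[nhdsWithin a (Set.Ioi a)] fun x => x - a)
    (hφ : (fun x => φ x - b₀ * (x - a) ^ (γ - 1)) =o[nhdsWithin a (Set.Ioi a)]
      fun x => (x - a) ^ (γ - 1))
    (hInt : ∀ᶠ q in Filter.atTop,
      MeasureTheory.IntegrableOn (fun x => φ x * Real.exp (-q * t x)) (Set.Ioo a b)) :
    Filter.Tendsto
      (fun q : ℝ => (∫ x in Set.Ioo a b, φ x * Real.exp (-q * t x)) /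
        (Real.exp (-q * t a) * (Real.Gamma γ * b₀ * a₀ ^ (-γ) * q ^ (-γ))))
      Filter.atTop (nhds 1) := by
  obtain ⟨Q, hQ⟩ := Filter.eventually_atTop.mp hInt
  have hΓ : 0 < Real.Gamma γ := Real.Gamma_pos_of_pos hγ
  set L : ℝ := Real.Gamma γ * b₀ * a₀ ^ (-γ) with hLdef
  have hL0 : 0 < L := mul_pos (mul_pos hΓ hb₀) (Real.rpow_pos_of_pos ha₀ _)
  -- integrability of the shifted integrand
  have hIntS : ∀ q : ℝ, Q ≤ q →
      IntegrableOn (fun x => φ x * Real.exp (-(q * (t x - t a)))) (Set.Ioo a b) := by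
    intro q hq
    have h : IntegrableOn (fun x => Real.exp (q * t a) * (φ x * Real.exp (-q * t x)))
        (Set.Ioo a b) := (hQ q hq).const_mul (Real.exp (q * t a))
    refine IntegrableOn.congr_fun h (fun x _ => ?_) measurableSet_Ioo
    rw [mul_left_comm, ← Real.exp_add]
    congr 2
    ring
  -- main claim
  have hF : Tendsto (fun q : ℝ => q ^ γ * ∫ x in Set.Ioo a b,
      φ x * Real.exp (-(q * (t x - t a)))) atTop (nhds L) := by
    rw [Metric.tendsto_nhds]
    intro ε hε
    -- choose η
    have hrc : ContinuousAt (fun y : ℝ => y ^ (-γ)) (a₀ - 0) :=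
      Real.continuousAt_rpow_const _ _ (Or.inl (by simpa using ha₀.ne'))
    have hrc' : ContinuousAt (fun y : ℝ => y ^ (-γ)) (a₀ + 0) :=
      Real.continuousAt_rpow_const _ _ (Or.inl (by simpa using ha₀.ne'))
    have hgp : Tendsto (fun η : ℝ => (b₀ + η) * ((a₀ - η) ^ (-γ) * Real.Gamma γ))
        (nhds 0) (nhds L) := by
      have h1 : ContinuousAt (fun η : ℝ => (b₀ + η) * ((a₀ - η) ^ (-γ) * Real.Gamma γ)) 0 :=
        (continuousAt_const.add continuousAt_id).mul
          ((hrc.comp (continuousAt_const.sub continuousAt_id)).mul continuousAt_const)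
      have := h1.tendsto
      simp only [add_zero, sub_zero] at this
      convert this using 2
      rw [hLdef]; ring
    have hgm : Tendsto (fun η : ℝ => (b₀ - η) * ((a₀ + η) ^ (-γ) * Real.Gamma γ))
        (nhds 0) (nhds L) := by
      have h1 : ContinuousAt (fun η : ℝ => (b₀ - η) * ((a₀ + η) ^ (-γ) * Real.Gamma γ)) 0 :=
        (continuousAt_const.sub continuousAt_id).mul
          ((hrc'.comp (continuousAt_const.add continuousAt_id)).mul continuousAt_const)
      have := h1.tendsto
      simp only [add_zero, sub_zero] at this
      convert this using 2
      rw [hLdef]; ring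
    have hE1 : ∀ᶠ η in nhds (0:ℝ),
        (b₀ + η) * ((a₀ - η) ^ (-γ) * Real.Gamma γ) < L + ε / 2 :=
      hgp.eventually_lt_const (by linarith)
    have hE2 : ∀ᶠ η in nhds (0:ℝ),
        L - ε / 2 < (b₀ - η) * ((a₀ + η) ^ (-γ) * Real.Gamma γ) :=
      hgm.eventually_const_lt (by linarith)
    have hE3 : ∀ᶠ η in nhds (0:ℝ), η < min a₀ b₀ :=
      eventually_lt_nhds (lt_min ha₀ hb₀)
    obtain ⟨η, ⟨hgpη, hgmη, hηab⟩, hη⟩ :=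
      ((((hE1.and (hE2.and hE3)).filter_mono nhdsWithin_le_nhds).and
        (eventually_mem_nhdsWithin (s := Set.Ioi (0:ℝ)))).exists)
    have hη : (0:ℝ) < η := hη
    have hηa : η < a₀ := lt_of_lt_of_le hηab (min_le_left _ _)
    have hηb : η < b₀ := lt_of_lt_of_le hηab (min_le_right _ _)
    -- choose cutoff c
    obtain ⟨u, hu, hsub⟩ := mem_nhdsGT_iff_exists_Ioo_subset.mp
      ((hT.def hη).and (hφ.def hη))
    set c : ℝ := min u ((a + b) / 2) with hcdef
    have hac : a < c := lt_min hu (by linarith)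
    have hcb : c < b := lt_of_le_of_lt (min_le_right _ _) (by linarith)
    have hIoosub : Set.Ioo a c ⊆ Set.Ioo a u := Set.Ioo_subset_Ioo le_rfl (min_le_left _ _)
    -- pointwise bounds on Ioo a c
    have hbounds : ∀ x ∈ Set.Ioo a c,
        (a₀ - η) * (x - a) ≤ t x - t a ∧ t x - t a ≤ (a₀ + η) * (x - a) ∧
        (b₀ - η) * (x - a) ^ (γ - 1) ≤ φ x ∧ φ x ≤ (b₀ + η) * (x - a) ^ (γ - 1) := by
      intro x hx
      have hxa : 0 < x - a := sub_pos.2 hx.1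
      have hp : 0 < (x - a) ^ (γ - 1) := Real.rpow_pos_of_pos hxa _
      obtain ⟨h1, h2⟩ := hsub (hIoosub hx)
      rw [Real.norm_eq_abs, Real.norm_eq_abs, abs_of_pos hxa] at h1
      rw [Real.norm_eq_abs, Real.norm_eq_abs, abs_of_pos hp] at h2
      obtain ⟨h1a, h1b⟩ := abs_le.mp h1
      obtain ⟨h2a, h2b⟩ := abs_le.mp h2
      refine ⟨by nlinarith, by nlinarith, by nlinarith, by nlinarith⟩
    -- tail min
    have hscont : ContinuousOn (fun x => t x - t a) (Set.Icc c b) :=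
      (ht.mono (Set.Icc_subset_Icc hac.le le_rfl)).sub continuousOn_const
    obtain ⟨x₀, hx₀, hmin₀⟩ := (isCompact_Icc (a := c) (b := b)).exists_isMinOn
      (Set.nonempty_Icc.2 hcb.le) hscont
    set m : ℝ := t x₀ - t a with hmdef
    have hm : 0 < m := sub_pos.2 (hmin x₀ ⟨lt_of_lt_of_le hac hx₀.1, hx₀.2⟩)
    have hsm : ∀ x ∈ Set.Ico c b, m ≤ t x - t a := fun x hx =>
      hmin₀ (Set.Ico_subset_Icc_self hx)
    -- pieces
    set A : ℝ → ℝ := fun q => ∫ x in Set.Ioo a c, φ x * Real.exp (-(q * (t x - t a))) with hAdef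
    set B : ℝ → ℝ := fun q => ∫ x in Set.Ico c b, φ x * Real.exp (-(q * (t x - t a))) with hBdef
    have hIcosub : Set.Ico c b ⊆ Set.Ioo a b := fun x hx => ⟨lt_of_lt_of_le hac hx.1, hx.2⟩
    have hsplit : ∀ q : ℝ, Q ≤ q →
        (∫ x in Set.Ioo a b, φ x * Real.exp (-(q * (t x - t a)))) = A q + B q := by
      intro q hq
      rw [← Set.Ioo_union_Ico_eq_Ioo hac hcb.le]
      exact setIntegral_union (by
          rw [Set.disjoint_left]; rintro x ⟨_, h2⟩ ⟨h3, _⟩; exact absurd h3 (not_le.2 h2))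
        measurableSet_Ico
        ((hIntS q hq).mono_set (Set.Ioo_subset_Ioo le_rfl hcb.le))
        ((hIntS q hq).mono_set hIcosub)
    -- model integrability on Ioo a c
    have hmodInt : ∀ c' q : ℝ, IntegrableOn
        (fun x => (x - a) ^ (γ - 1) * Real.exp (-(q * c' * (x - a)))) (Set.Ioo a c) := by
      intro c' q
      rw [← intervalIntegrable_iff_integrableOn_Ioo_of_le hac.le]
      have hbase : IntervalIntegrable (fun x : ℝ => (x - a) ^ (γ - 1)) volume a c := by
        have := (intervalIntegral.intervalIntegrable_rpow'
          (a := 0) (b := c - a) (by linarith : (-1:ℝ) < γ - 1)).comp_sub_right a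
        simpa using this
      exact hbase.mul_continuousOn (by fun_prop)
    -- model integral identity
    have hJ : ∀ c' q : ℝ,
        (∫ x in Set.Ioo a c, (x - a) ^ (γ - 1) * Real.exp (-(q * c' * (x - a))))
          = ∫ u in (0:ℝ)..(c - a), u ^ (γ - 1) * Real.exp (-(q * c' * u)) := by
      intro c' q
      rw [← integral_Ioc_eq_integral_Ioo, ← intervalIntegral.integral_of_le hac.le]
      have := intervalIntegral.integral_comp_sub_right
        (fun u => u ^ (γ - 1) * Real.exp (-(q * c' * u))) a (a := a) (b := c)
      simpa using this
    -- comparison of A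
    have hAub : ∀ q : ℝ, Q ≤ q → 0 < q → A q ≤ (b₀ + η) *
        ∫ u in (0:ℝ)..(c - a), u ^ (γ - 1) * Real.exp (-(q * (a₀ - η) * u)) := by
      intro q hq hq0
      rw [← hJ (a₀ - η) q, ← integral_const_mul]
      apply setIntegral_mono_on ((hIntS q hq).mono_set (Set.Ioo_subset_Ioo le_rfl hcb.le))
        ((hmodInt (a₀ - η) q).const_mul _) measurableSet_Ioo
      intro x hx
      obtain ⟨hs1, hs2, hφ1, hφ2⟩ := hbounds x hx
      have hxa : 0 < x - a := sub_pos.2 hx.1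
      have hp : 0 < (x - a) ^ (γ - 1) := Real.rpow_pos_of_pos hxa _
      have hφpos : 0 ≤ φ x := le_trans (mul_nonneg (by linarith) hp.le) hφ1
      have hexp : Real.exp (-(q * (t x - t a))) ≤ Real.exp (-(q * ((a₀ - η) * (x - a)))) := by
        apply Real.exp_le_exp.2
        apply neg_le_neg
        exact mul_le_mul_of_nonneg_left hs1 hq0.le
      calc φ x * Real.exp (-(q * (t x - t a)))
          ≤ ((b₀ + η) * (x - a) ^ (γ - 1)) * Real.exp (-(q * ((a₀ - η) * (x - a)))) :=
            mul_le_mul hφ2 hexp (Real.exp_pos _).le (mul_nonneg (by linarith) hp.le)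
        _ = (b₀ + η) * ((x - a) ^ (γ - 1) * Real.exp (-(q * (a₀ - η) * (x - a)))) := by
            ring_nf
    have hAlb : ∀ q : ℝ, Q ≤ q → 0 < q → (b₀ - η) *
        (∫ u in (0:ℝ)..(c - a), u ^ (γ - 1) * Real.exp (-(q * (a₀ + η) * u))) ≤ A q := by
      intro q hq hq0
      rw [← hJ (a₀ + η) q, ← integral_const_mul]
      apply setIntegral_mono_on ((hmodInt (a₀ + η) q).const_mul _)
        ((hIntS q hq).mono_set (Set.Ioo_subset_Ioo le_rfl hcb.le)) measurableSet_Ioo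
      intro x hx
      obtain ⟨hs1, hs2, hφ1, hφ2⟩ := hbounds x hx
      have hxa : 0 < x - a := sub_pos.2 hx.1
      have hp : 0 < (x - a) ^ (γ - 1) := Real.rpow_pos_of_pos hxa _
      have hexp : Real.exp (-(q * ((a₀ + η) * (x - a)))) ≤ Real.exp (-(q * (t x - t a))) := by
        apply Real.exp_le_exp.2
        apply neg_le_neg
        exact mul_le_mul_of_nonneg_left hs2 hq0.le
      calc (b₀ - η) * ((x - a) ^ (γ - 1) * Real.exp (-(q * (a₀ + η) * (x - a))))
          = ((b₀ - η) * (x - a) ^ (γ - 1)) * Real.exp (-(q * ((a₀ + η) * (x - a)))) := by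
            ring_nf
        _ ≤ φ x * Real.exp (-(q * (t x - t a))) :=
            mul_le_mul hφ1 hexp (Real.exp_pos _).le
              (le_trans (mul_nonneg (by linarith) hp.le) hφ1)
    -- tail bound
    set K : ℝ := ∫ x in Set.Ico c b, |φ x * Real.exp (-(Q * (t x - t a)))| with hKdef
    have hK0 : 0 ≤ K := integral_nonneg (fun x => abs_nonneg _)
    have htail : ∀ q : ℝ, Q ≤ q →
        |B q| ≤ (Real.exp (Q * m) * K) * Real.exp (-(m * q)) := by
      intro q hq
      have hIq : IntegrableOn (fun x => φ x * Real.exp (-(q * (t x - t a)))) (Set.Ico c b) :=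
        (hIntS q hq).mono_set hIcosub
      have hIQ : IntegrableOn (fun x => |φ x * Real.exp (-(Q * (t x - t a)))|) (Set.Ico c b) :=
        ((hIntS Q le_rfl).mono_set hIcosub).abs
      have step1 : |B q| ≤ ∫ x in Set.Ico c b, |φ x * Real.exp (-(q * (t x - t a)))| := by
        have h := norm_integral_le_integral_norm
          (μ := volume.restrict (Set.Ico c b))
          (f := fun x => φ x * Real.exp (-(q * (t x - t a))))
        simp only [Real.norm_eq_abs] at h
        exact h
      have step2 : (∫ x in Set.Ico c b, |φ x * Real.exp (-(q * (t x - t a)))|) ≤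
          ∫ x in Set.Ico c b,
            |φ x * Real.exp (-(Q * (t x - t a)))| * Real.exp (-((q - Q) * m)) := by
        apply setIntegral_mono_on hIq.abs (hIQ.mul_const _) measurableSet_Ico
        intro x hx
        have hsx := hsm x hx
        rw [abs_mul, abs_mul, abs_of_pos (Real.exp_pos _), abs_of_pos (Real.exp_pos _)]
        have h1 : Real.exp (-(q * (t x - t a)))
            = Real.exp (-(Q * (t x - t a))) * Real.exp (-((q - Q) * (t x - t a))) := by
          rw [← Real.exp_add]; congr 1; ring
        have h2 : Real.exp (-((q - Q) * (t x - t a))) ≤ Real.exp (-((q - Q) * m)) := by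
          apply Real.exp_le_exp.2
          apply neg_le_neg
          exact mul_le_mul_of_nonneg_left hsx (by linarith)
        rw [h1, ← mul_assoc]
        exact mul_le_mul_of_nonneg_left h2 (by positivity)
      have step3 : (∫ x in Set.Ico c b,
            |φ x * Real.exp (-(Q * (t x - t a)))| * Real.exp (-((q - Q) * m)))
          = K * Real.exp (-((q - Q) * m)) := by
        rw [integral_mul_const]
      have step4 : K * Real.exp (-((q - Q) * m))
          = (Real.exp (Q * m) * K) * Real.exp (-(m * q)) := by
        rw [mul_comm (Real.exp (Q * m)) K, mul_assoc, ← Real.exp_add]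
        congr 2
        ring
      calc |B q| ≤ _ := step1
        _ ≤ _ := step2
        _ = _ := step3
        _ = _ := step4
    -- eventual bounds
    have hEa : ∀ᶠ q : ℝ in atTop, (b₀ + η) * (q ^ γ *
        ∫ u in (0:ℝ)..(c - a), u ^ (γ - 1) * Real.exp (-(q * (a₀ - η) * u))) < L + ε / 2 := by
      have hmod := (laplace_model_aux γ (a₀ - η) (c - a) hγ (by linarith) (by linarith)).const_mul
        (b₀ + η)
      exact hmod.eventually_lt_const hgpη
    have hEb : ∀ᶠ q : ℝ in atTop, L - ε / 2 < (b₀ - η) * (q ^ γ *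
        ∫ u in (0:ℝ)..(c - a), u ^ (γ - 1) * Real.exp (-(q * (a₀ + η) * u))) := by
      have hmod := (laplace_model_aux γ (a₀ + η) (c - a) hγ (by linarith) (by linarith)).const_mul
        (b₀ - η)
      exact hmod.eventually_const_lt hgmη
    have hEtail : ∀ᶠ q : ℝ in atTop, q ^ γ * |B q| < ε / 2 := by
      have h0 : Tendsto (fun q : ℝ => (Real.exp (Q * m) * K) * (q ^ γ * Real.exp (-m * q)))
          atTop (nhds 0) := by
        simpa using (tendsto_rpow_mul_exp_neg_mul_atTop_nhds_zero γ m hm).const_mul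
          (Real.exp (Q * m) * K)
      filter_upwards [eventually_ge_atTop Q, eventually_ge_atTop (0:ℝ),
        h0.eventually_lt_const (by linarith : (0:ℝ) < ε / 2)] with q hq hq0 hlt
      have h1 : q ^ γ * |B q| ≤ (Real.exp (Q * m) * K) * (q ^ γ * Real.exp (-m * q)) := by
        have := mul_le_mul_of_nonneg_left (htail q hq) (Real.rpow_nonneg hq0 γ)
        calc q ^ γ * |B q| ≤ q ^ γ * ((Real.exp (Q * m) * K) * Real.exp (-(m * q))) := this
          _ = (Real.exp (Q * m) * K) * (q ^ γ * Real.exp (-m * q)) := by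
              rw [neg_mul]; ring
      exact lt_of_le_of_lt h1 hlt
    -- assemble
    filter_upwards [hEa, hEb, hEtail, eventually_ge_atTop Q, eventually_gt_atTop (0:ℝ)]
      with q hqa hqb hqt hqQ hq0
    have hqγ : (0:ℝ) ≤ q ^ γ := Real.rpow_nonneg hq0.le γ
    rw [hsplit q hqQ]
    have hAu : q ^ γ * A q < L + ε / 2 := by
      have h1 := mul_le_mul_of_nonneg_left (hAub q hqQ hq0) hqγ
      have h2 : q ^ γ * ((b₀ + η) *
          ∫ u in (0:ℝ)..(c - a), u ^ (γ - 1) * Real.exp (-(q * (a₀ - η) * u)))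
          = (b₀ + η) * (q ^ γ *
          ∫ u in (0:ℝ)..(c - a), u ^ (γ - 1) * Real.exp (-(q * (a₀ - η) * u))) := by ring
      linarith
    have hAl : L - ε / 2 < q ^ γ * A q := by
      have h1 := mul_le_mul_of_nonneg_left (hAlb q hqQ hq0) hqγ
      have h2 : q ^ γ * ((b₀ - η) *
          ∫ u in (0:ℝ)..(c - a), u ^ (γ - 1) * Real.exp (-(q * (a₀ + η) * u)))
          = (b₀ - η) * (q ^ γ *
          ∫ u in (0:ℝ)..(c - a), u ^ (γ - 1) * Real.exp (-(q * (a₀ + η) * u))) := by ring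
      linarith
    have hBabs : |q ^ γ * B q| < ε / 2 := by
      rw [abs_mul, abs_of_nonneg hqγ]
      exact hqt
    rw [Real.dist_eq, abs_lt]
    have hB1 : q ^ γ * B q < ε / 2 := lt_of_le_of_lt (le_abs_self _) hBabs
    have hB2 : -(ε / 2) < q ^ γ * B q := neg_lt_of_abs_lt hBabs
    have hexpand : q ^ γ * (A q + B q) = q ^ γ * A q + q ^ γ * B q := by ring
    constructor <;> linarith
  -- conclude
  have hfinal : (fun q : ℝ => (q ^ γ * ∫ x in Set.Ioo a b,
        φ x * Real.exp (-(q * (t x - t a)))) / L) =ᶠ[atTop]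
      (fun q : ℝ => (∫ x in Set.Ioo a b, φ x * Real.exp (-q * t x)) /
        (Real.exp (-q * t a) * (Real.Gamma γ * b₀ * a₀ ^ (-γ) * q ^ (-γ)))) := by
    filter_upwards [eventually_gt_atTop (0:ℝ)] with q hq
    have h1 : (∫ x in Set.Ioo a b, φ x * Real.exp (-q * t x))
        = Real.exp (-q * t a) * ∫ x in Set.Ioo a b, φ x * Real.exp (-(q * (t x - t a))) := by
      rw [← integral_const_mul]
      apply setIntegral_congr_fun measurableSet_Ioo
      intro x _
      dsimp only
      rw [mul_left_comm, ← Real.exp_add]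
      congr 2
      ring
    have hqγ : (0:ℝ) < q ^ γ := Real.rpow_pos_of_pos hq γ
    have hexp : Real.exp (-q * t a) ≠ 0 := (Real.exp_pos _).ne'
    rw [h1, Real.rpow_neg hq.le]
    rw [show Real.Gamma γ * b₀ * a₀ ^ (-γ) * (q ^ γ)⁻¹ = L * (q ^ γ)⁻¹ by rw [hLdef]]
    field_simp
  have hdiv := hF.div_const L
  rw [div_self hL0.ne'] at hdiv
  exact hdiv.congr' hfinal
end
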